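/- If W¹ and W² are finitely generated bigraded R-modules with Wⁱ ⊗_{F[U]} F[U,U⁻¹] ≅ F[U,U⁻¹] for i = 1,2, and φ : W¹ → W² is a bigrading-preserving R-module homomorphism that becomes an isomorphism after tensoring with F[U,U⁻¹] over F[U], then ν₀(W¹) ≥ ν₀(W²). -/

import Mathlib

open MvPolynomial

set_option maxHeartbeats 1000000
set_option synthInstance.maxHeartbeats 400000

open MvPolynomial


lemma nu_aux_bddTorsion (R : Type*) [CommRing R] [IsNoetherianRing R] (U : R)
    (W : Type*) [AddCommGroup W] [Module R W] [Module.Finite R W] :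
    ∃ N : ℕ, ∀ w : W, (∃ n : ℕ, U ^ n • w = 0) → U ^ N • w = 0 := by
  have hmono : Monotone (fun n : ℕ => LinearMap.ker (LinearMap.lsmul R W (U ^ n))) := by
    intro a b hab w hw
    simp only [LinearMap.mem_ker, LinearMap.lsmul_apply] at *
    obtain ⟨c, rfl⟩ := Nat.exists_eq_add_of_le hab
    rw [pow_add, mul_comm, mul_smul, hw, smul_zero]
  set g : ℕ →o Submodule R W :=
    ⟨fun n : ℕ => LinearMap.ker (LinearMap.lsmul R W (U ^ n)), hmono⟩ with hg
  obtain ⟨N, hN⟩ := monotone_stabilizes_iff_noetherian.mpr inferInstance g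
  refine ⟨N, fun w ⟨n, hn⟩ => ?_⟩
  rcases le_or_gt n N with h | h
  · obtain ⟨c, rfl⟩ := Nat.exists_eq_add_of_le h
    rw [pow_add, mul_comm, mul_smul, hn, smul_zero]
  · have hw : w ∈ g n := by
      simp only [hg, OrderHom.coe_mk, LinearMap.mem_ker, LinearMap.lsmul_apply]
      exact hn
    rw [← hN n h.le] at hw
    simp only [hg, OrderHom.coe_mk, LinearMap.mem_ker, LinearMap.lsmul_apply] at hw
    exact hw



section Decomp

variable {M : Type*} [AddCommGroup M] {ι : Type*} [DecidableEq ι] {P : ι → AddSubgroup M}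

/-- The projection onto the `p`-th component of an internal direct sum decomposition. -/
noncomputable def nuProj (hP : DirectSum.IsInternal P) (p : ι) : M →+ M where
  toFun x := ((AddEquiv.ofBijective (DirectSum.coeAddMonoidHom P) hP).symm x p : M)
  map_zero' := by simp
  map_add' x y := by
    dsimp only
    rw [map_add, DirectSum.add_apply, AddSubgroup.coe_add]

lemma nuProj_mem (hP : DirectSum.IsInternal P) (p : ι) (x : M) : nuProj hP p x ∈ P p :=
  SetLike.coe_mem _

lemma nuProj_of_mem (hP : DirectSum.IsInternal P) {p q : ι} {x : M}
    (hx : x ∈ P q) (hne : p ≠ q) : nuProj hP p x = 0 := by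
  have he : (AddEquiv.ofBijective (DirectSum.coeAddMonoidHom P) hP).symm x
      = DirectSum.of (fun i => (P i : AddSubgroup M)) q ⟨x, hx⟩ := by
    apply (AddEquiv.ofBijective (DirectSum.coeAddMonoidHom P) hP).injective
    rw [AddEquiv.apply_symm_apply]
    exact (DirectSum.coeAddMonoidHom_of P q ⟨x, hx⟩).symm
  show ((AddEquiv.ofBijective (DirectSum.coeAddMonoidHom P) hP).symm x p : M) = 0
  rw [he, DirectSum.of_eq_of_ne _ _ _ hne]
  rfl

lemma nuProj_exists_ne_zero (hP : DirectSum.IsInternal P) {x : M} (hx : x ≠ 0) :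
    ∃ p, nuProj hP p x ≠ 0 := by
  by_contra hcon
  push_neg at hcon
  apply hx
  have he : (AddEquiv.ofBijective (DirectSum.coeAddMonoidHom P) hP).symm x = 0 := by
    apply DFinsupp.ext
    intro p
    exact Subtype.ext (hcon p)
  calc x = (AddEquiv.ofBijective (DirectSum.coeAddMonoidHom P) hP)
          ((AddEquiv.ofBijective (DirectSum.coeAddMonoidHom P) hP).symm x) := by
            rw [AddEquiv.apply_symm_apply]
    _ = 0 := by rw [he, map_zero]

end Decomp

section DecompZ

variable {M : Type*} [AddCommGroup M] {P : ℤ × ℤ → AddSubgroup M}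

lemma nuProj_of_mem_Q (hP : DirectSum.IsInternal P) {s : ℤ} {x : M}
    (hx : x ∈ ⨆ δ : ℤ, P (δ, s)) {p : ℤ × ℤ} (hne : p.2 ≠ s) : nuProj hP p x = 0 := by
  refine AddSubgroup.iSup_induction (C := fun y => nuProj hP p y = 0) _ hx
    (fun δ y hy => ?_) (map_zero _) (fun a b ha hb => ?_)
  · exact nuProj_of_mem hP hy (by simp only [ne_eq, Prod.ext_iff]; tauto)
  · show nuProj hP p (a + b) = 0
    rw [map_add, show nuProj hP p a = 0 from ha, show nuProj hP p b = 0 from hb, add_zero]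

lemma nu_exists_decompQ (hP : DirectSum.IsInternal P) (x : M) :
    ∃ (T : Finset ℤ) (f : ℤ → M),
      (∀ t, f t ∈ ⨆ δ : ℤ, P (δ, t)) ∧ x = ∑ t ∈ T, f t := by
  obtain ⟨y, rfl⟩ := hP.surjective x
  induction y using DirectSum.induction_on with
  | zero => exact ⟨∅, fun _ => 0, fun t => zero_mem _, by simp⟩
  | of p a =>
    refine ⟨{p.2}, fun t => if t = p.2 then (a : M) else 0, fun t => ?_, ?_⟩
    · show (if t = p.2 then (a : M) else 0) ∈ ⨆ δ : ℤ, P (δ, t)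
      by_cases h : t = p.2
      · rw [if_pos h]
        exact le_iSup (fun δ : ℤ => P (δ, t)) p.1 (by rw [h]; exact a.2)
      · rw [if_neg h]; exact zero_mem _
    · rw [Finset.sum_singleton]
      show (DirectSum.coeAddMonoidHom P) (DirectSum.of _ p a)
        = if p.2 = p.2 then (a : M) else 0
      rw [if_pos rfl, DirectSum.coeAddMonoidHom_of]
  | add y z hy hz =>
    obtain ⟨T₁, f₁, hf₁, h₁⟩ := hy
    obtain ⟨T₂, f₂, hf₂, h₂⟩ := hz
    refine ⟨T₁ ∪ T₂, fun t => (if t ∈ T₁ then f₁ t else 0) + (if t ∈ T₂ then f₂ t else 0),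
      fun t => add_mem (by split <;> [exact hf₁ t; exact zero_mem _])
        (by split <;> [exact hf₂ t; exact zero_mem _]), ?_⟩
    rw [(DirectSum.coeAddMonoidHom P).map_add, h₁, h₂, Finset.sum_add_distrib,
      Finset.sum_ite_mem, Finset.sum_ite_mem,
      Finset.union_inter_cancel_left, Finset.union_inter_cancel_right]

lemma nu_smul_mem_Q {R : Type*} [CommRing R] [Module R M] {u : R}
    (hdeg : ∀ δ s : ℤ, ∀ w ∈ P (δ, s), u • w ∈ P (δ - 1, s - 1)) {s : ℤ} {x : M}
    (hx : x ∈ ⨆ δ : ℤ, P (δ, s)) : u • x ∈ ⨆ δ : ℤ, P (δ, s - 1) := by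
  refine AddSubgroup.iSup_induction (C := fun y => u • y ∈ ⨆ δ : ℤ, P (δ, s - 1)) _ hx
    (fun δ y hy => ?_) ?_ (fun a b ha hb => ?_)
  · exact le_iSup (fun δ : ℤ => P (δ, s - 1)) (δ - 1) (hdeg δ s y hy)
  · show u • (0 : M) ∈ ⨆ δ : ℤ, P (δ, s - 1)
    rw [smul_zero]; exact zero_mem _
  · show u • (a + b) ∈ ⨆ δ : ℤ, P (δ, s - 1)
    rw [smul_add]
    exact add_mem ha hb

lemma nu_pow_smul_mem_Q {R : Type*} [CommRing R] [Module R M] {u : R}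
    (hdeg : ∀ δ s : ℤ, ∀ w ∈ P (δ, s), u • w ∈ P (δ - 1, s - 1)) {s : ℤ} {x : M}
    (hx : x ∈ ⨆ δ : ℤ, P (δ, s)) (d : ℕ) : u ^ d • x ∈ ⨆ δ : ℤ, P (δ, s - d) := by
  induction d with
  | zero => simpa using hx
  | succ d ih =>
    have h1 := nu_smul_mem_Q hdeg ih
    have hcast : s - (d : ℤ) - 1 = s - ((d + 1 : ℕ) : ℤ) := by push_cast; ring
    rw [hcast] at h1
    rw [pow_succ, mul_comm, mul_smul]
    exact h1

end DecompZ

/-- Let `F` be a field and `R = F[U,V]/(UV)`.  If `W¹`, `W²` are finitely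
generated bigraded `R`-modules with `Wⁱ ⊗_{F[U]} F[U,U⁻¹] ≅ F[U,U⁻¹]`, and
`φ : W¹ → W²` is a bigrading-preserving `R`-module homomorphism that becomes an
isomorphism after inverting `U`, then `ν₀(W¹) ≥ ν₀(W²)`, where
`ν₀(W) = −max{s : U^d · W_s ≠ 0 for all d ≥ 0}`. -/
theorem nu_zero_monotone (F : Type*) [Field F]
    (R : Type*) [CommRing R] (π : MvPolynomial (Fin 2) F →+* R)
    (hπ : Function.Surjective π)
    (hker : RingHom.ker π = Ideal.span {(X 0 * X 1 : MvPolynomial (Fin 2) F)})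
    (U V : R) (hU : U = π (X 0)) (hV : V = π (X 1))
    (W₁ W₂ : Type*) [AddCommGroup W₁] [Module R W₁] [Module.Finite R W₁]
    [AddCommGroup W₂] [Module R W₂] [Module.Finite R W₂]
    (P₁ : ℤ × ℤ → AddSubgroup W₁) (P₂ : ℤ × ℤ → AddSubgroup W₂)
    (hdecomp₁ : DirectSum.IsInternal P₁) (hdecomp₂ : DirectSum.IsInternal P₂)
    (hUdeg₁ : ∀ δ s : ℤ, ∀ w ∈ P₁ (δ, s), U • w ∈ P₁ (δ - 1, s - 1))
    (hVdeg₁ : ∀ δ s : ℤ, ∀ w ∈ P₁ (δ, s), V • w ∈ P₁ (δ - 1, s + 1))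
    (hUdeg₂ : ∀ δ s : ℤ, ∀ w ∈ P₂ (δ, s), U • w ∈ P₂ (δ - 1, s - 1))
    (hVdeg₂ : ∀ δ s : ℤ, ∀ w ∈ P₂ (δ, s), V • w ∈ P₂ (δ - 1, s + 1))
    (hloc₁ : Nonempty
      (LocalizedModule (Submonoid.powers U) W₁ ≃ₗ[R] Localization (Submonoid.powers U)))
    (hloc₂ : Nonempty
      (LocalizedModule (Submonoid.powers U) W₂ ≃ₗ[R] Localization (Submonoid.powers U)))
    (φ : W₁ →ₗ[R] W₂)
    (hgr : ∀ p : ℤ × ℤ, ∀ w ∈ P₁ p, φ w ∈ P₂ p)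
    (hbij : Function.Bijective
      (IsLocalizedModule.map (Submonoid.powers U)
        (LocalizedModule.mkLinearMap (Submonoid.powers U) W₁)
        (LocalizedModule.mkLinearMap (Submonoid.powers U) W₂) φ)) :
    -sSup {s : ℤ | ∀ d : ℕ, ∃ w ∈ (⨆ δ : ℤ, P₁ (δ, s)), U ^ d • w ≠ 0} ≥
    -sSup {s : ℤ | ∀ d : ℕ, ∃ w ∈ (⨆ δ : ℤ, P₂ (δ, s)), U ^ d • w ≠ 0} := by
  set S₁ : Set ℤ := {s : ℤ | ∀ d : ℕ, ∃ w ∈ (⨆ δ : ℤ, P₁ (δ, s)), U ^ d • w ≠ 0} with hS₁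
  set S₂ : Set ℤ := {s : ℤ | ∀ d : ℕ, ∃ w ∈ (⨆ δ : ℤ, P₂ (δ, s)), U ^ d • w ≠ 0} with hS₂
  have hNoeth : IsNoetherianRing R := isNoetherianRing_of_surjective _ R π hπ
  obtain ⟨N₁, hN₁⟩ := nu_aux_bddTorsion R U W₁
  obtain ⟨N₂, hN₂⟩ := nu_aux_bddTorsion R U W₂
  obtain ⟨K, hK⟩ := nu_aux_bddTorsion R U (W₂ ⧸ LinearMap.range φ)
  -- the commuting square for the localized map
  have hcomm : ∀ w : W₁,
      (IsLocalizedModule.map (Submonoid.powers U)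
        (LocalizedModule.mkLinearMap (Submonoid.powers U) W₁)
        (LocalizedModule.mkLinearMap (Submonoid.powers U) W₂) φ)
        (LocalizedModule.mkLinearMap (Submonoid.powers U) W₁ w)
      = LocalizedModule.mkLinearMap (Submonoid.powers U) W₂ (φ w) := by
    intro w
    rw [LocalizedModule.mkLinearMap_apply, LocalizedModule.mkLinearMap_apply]
    exact IsLocalizedModule.map_LocalizedModules (Submonoid.powers U) φ w 1
  -- torsion criterion via localization
  have hmk₁ : ∀ w : W₁,
      LocalizedModule.mkLinearMap (Submonoid.powers U) W₁ w = 0 ↔ ∃ n : ℕ, U ^ n • w = 0 := by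
    intro w
    rw [IsLocalizedModule.eq_zero_iff (Submonoid.powers U)]
    constructor
    · rintro ⟨s', hs'⟩
      obtain ⟨n, hn⟩ := s'.2
      refine ⟨n, ?_⟩
      have hn' : U ^ n = (s' : R) := hn
      rw [hn']
      simpa [Submonoid.smul_def] using hs'
    · rintro ⟨n, hn⟩
      exact ⟨⟨U ^ n, ⟨n, rfl⟩⟩, by simpa [Submonoid.smul_def] using hn⟩
  have hmk₂ : ∀ w : W₂,
      LocalizedModule.mkLinearMap (Submonoid.powers U) W₂ w = 0 ↔ ∃ n : ℕ, U ^ n • w = 0 := by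
    intro w
    rw [IsLocalizedModule.eq_zero_iff (Submonoid.powers U)]
    constructor
    · rintro ⟨s', hs'⟩
      obtain ⟨n, hn⟩ := s'.2
      refine ⟨n, ?_⟩
      have hn' : U ^ n = (s' : R) := hn
      rw [hn']
      simpa [Submonoid.smul_def] using hs'
    · rintro ⟨n, hn⟩
      exact ⟨⟨U ^ n, ⟨n, rfl⟩⟩, by simpa [Submonoid.smul_def] using hn⟩
  -- φ maps Alexander-homogeneous parts to Alexander-homogeneous parts
  have hφQ : ∀ s : ℤ, ∀ w ∈ (⨆ δ : ℤ, P₁ (δ, s)), φ w ∈ ⨆ δ : ℤ, P₂ (δ, s) := by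
    intro s w hw
    refine AddSubgroup.iSup_induction (C := fun y => φ y ∈ ⨆ δ : ℤ, P₂ (δ, s)) _ hw
      (fun δ y hy => ?_) ?_ (fun a b ha hb => ?_)
    · exact le_iSup (fun δ : ℤ => P₂ (δ, s)) δ (hgr (δ, s) y hy)
    · show φ 0 ∈ ⨆ δ : ℤ, P₂ (δ, s)
      rw [map_zero]; exact zero_mem _
    · show φ (a + b) ∈ ⨆ δ : ℤ, P₂ (δ, s)
      rw [map_add]; exact add_mem ha hb
  -- first key inclusion
  have key1 : S₁ ⊆ S₂ := by
    intro s hs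
    obtain ⟨w, hwQ, hwne⟩ := hs N₁
    have hwnt : ∀ n : ℕ, U ^ n • w ≠ 0 := fun n hn => hwne (hN₁ w ⟨n, hn⟩)
    have hφnt : ∀ n : ℕ, U ^ n • (φ w) ≠ 0 := by
      intro n hn
      have h2 : LocalizedModule.mkLinearMap (Submonoid.powers U) W₂ (φ w) = 0 :=
        (hmk₂ (φ w)).mpr ⟨n, hn⟩
      have h1 : LocalizedModule.mkLinearMap (Submonoid.powers U) W₁ w = 0 := by
        apply hbij.injective
        rw [hcomm, h2, map_zero]
      obtain ⟨n', hn'⟩ := (hmk₁ w).mp h1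
      exact hwnt n' hn'
    exact fun d => ⟨φ w, hφQ s w hwQ, hφnt d⟩
  -- uniform bound for the cokernel
  have hsurjK : ∀ y : W₂, ∃ x : W₁, φ x = U ^ K • y := by
    intro y
    have htor : ∃ n : ℕ,
        U ^ n • (Submodule.Quotient.mk y : W₂ ⧸ LinearMap.range φ) = 0 := by
      obtain ⟨z, hz⟩ := hbij.surjective
        (LocalizedModule.mkLinearMap (Submonoid.powers U) W₂ y)
      obtain ⟨⟨x, t⟩, ht⟩ :=
        IsLocalizedModule.surj (Submonoid.powers U)
          (LocalizedModule.mkLinearMap (Submonoid.powers U) W₁) z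
      obtain ⟨j, hj⟩ := t.2
      have e1 : LocalizedModule.mkLinearMap (Submonoid.powers U) W₂ (φ x)
          = LocalizedModule.mkLinearMap (Submonoid.powers U) W₂ ((t : R) • y) := by
        rw [← hcomm x, ← ht, Submonoid.smul_def, map_smul, map_smul, hz, ← map_smul]
      have e2 : LocalizedModule.mkLinearMap (Submonoid.powers U) W₂ (φ x - (t : R) • y)
          = 0 := by
        rw [map_sub, e1, sub_self]
      obtain ⟨m, hm⟩ := (hmk₂ _).mp e2
      refine ⟨m + j, ?_⟩
      have hj' : U ^ j = (t : R) := hj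
      have h5 : U ^ m • φ x = U ^ m • ((t : R) • y) := by
        have h6 := hm
        rw [smul_sub, sub_eq_zero] at h6
        exact h6
      have hsm : U ^ (m + j) • y = φ (U ^ m • x) := by
        calc U ^ (m + j) • y = (U ^ m * U ^ j) • y := by rw [pow_add]
          _ = U ^ m • (U ^ j • y) := mul_smul _ _ _
          _ = U ^ m • ((t : R) • y) := by rw [hj']
          _ = U ^ m • φ x := h5.symm
          _ = φ (U ^ m • x) := (map_smul φ _ _).symm
      rw [← Submodule.Quotient.mk_smul, hsm, Submodule.Quotient.mk_eq_zero]
      exact ⟨U ^ m • x, rfl⟩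
    have h0 : U ^ K • (Submodule.Quotient.mk y : W₂ ⧸ LinearMap.range φ) = 0 := hK _ htor
    rw [← Submodule.Quotient.mk_smul, Submodule.Quotient.mk_eq_zero] at h0
    obtain ⟨x, hx⟩ := h0
    exact ⟨x, hx⟩
  -- second key: shifting elements of S₂ into S₁
  have key2 : ∀ s ∈ S₂, s - (K : ℤ) ∈ S₁ := by
    intro s hs
    obtain ⟨y, hyQ, hyne⟩ := hs N₂
    have hynt : ∀ n : ℕ, U ^ n • y ≠ 0 := fun n hn => hyne (hN₂ y ⟨n, hn⟩)
    obtain ⟨x, hx⟩ := hsurjK y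
    obtain ⟨T, f, hf, hsum⟩ := nu_exists_decompQ hdecomp₁ x
    intro d
    refine ⟨f (s - (K : ℤ)), hf _, fun h0 => ?_⟩
    have hz0 : U ^ (K + d) • y ≠ 0 := hynt _
    have hzQ : U ^ (K + d) • y ∈ ⨆ δ : ℤ, P₂ (δ, s - ((K + d : ℕ) : ℤ)) :=
      nu_pow_smul_mem_Q hUdeg₂ hyQ (K + d)
    obtain ⟨p, hp⟩ := nuProj_exists_ne_zero hdecomp₂ hz0
    have hps : p.2 = s - ((K + d : ℕ) : ℤ) := by
      by_contra hne
      exact hp (nuProj_of_mem_Q hdecomp₂ hzQ hne)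
    have heq : U ^ (K + d) • y = ∑ t ∈ T, U ^ d • φ (f t) := by
      calc U ^ (K + d) • y = U ^ d • (U ^ K • y) := by
            rw [← mul_smul, ← pow_add, add_comm]
        _ = U ^ d • φ x := by rw [hx]
        _ = U ^ d • φ (∑ t ∈ T, f t) := by rw [← hsum]
        _ = ∑ t ∈ T, U ^ d • φ (f t) := by rw [map_sum, Finset.smul_sum]
    apply hp
    rw [heq, map_sum]
    apply Finset.sum_eq_zero
    intro t htT
    by_cases hts : t = s - (K : ℤ)
    · have : U ^ d • φ (f t) = 0 := by
        rw [hts, ← map_smul, h0, map_zero]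
      rw [this, map_zero]
    · have hmem : U ^ d • φ (f t) ∈ ⨆ δ : ℤ, P₂ (δ, t - (d : ℤ)) :=
        nu_pow_smul_mem_Q hUdeg₂ (hφQ t (f t) (hf t)) d
      refine nuProj_of_mem_Q hdecomp₂ hmem ?_
      rw [hps]
      push_cast
      omega
  -- conclude
  have hmain : sSup S₁ ≤ sSup S₂ := by
    by_cases hS2 : S₂.Nonempty
    · by_cases hbdd : BddAbove S₂
      · obtain ⟨s, hs⟩ := hS2
        exact csSup_le_csSup hbdd ⟨s - (K : ℤ), key2 s hs⟩ key1
      · have hbdd1 : ¬BddAbove S₁ := by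
          rintro ⟨b, hb⟩
          apply hbdd
          refine ⟨b + (K : ℤ), fun s hs => ?_⟩
          have := hb (key2 s hs)
          omega
        rw [csSup_of_not_bddAbove hbdd, csSup_of_not_bddAbove hbdd1]
    · have h2 : S₂ = ∅ := Set.not_nonempty_iff_eq_empty.mp hS2
      have h1 : S₁ = ∅ := Set.subset_empty_iff.mp (h2 ▸ key1)
      rw [h1, h2]
  exact neg_le_neg hmain
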